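/- For any 0 < p < q < r < ∞ and any constants C_p, C_q, C_r > 0, there exist ε, δ > 0 such that for any measurable function f : ℝ → ℝ satisfying ‖f‖_{L^p} ≤ C_p, ‖f‖_{L^q} ≥ C_q, and ‖f‖_{L^r} ≤ C_r, one has |{x : |f(x)| > ε}| ≥ δ. -/

import Mathlib

open MeasureTheory
open scoped ENNReal NNReal

private lemma pqr_core (p q r : ℝ) (hp : 0 < p) (hpq : p < q) (hqr : q < r)
    (Cp Cq Cr ε : ℝ) (hCq : 0 < Cq) (hCr : 0 < Cr) (hε : 0 < ε)
    (hεpow : ε ^ (q - p) * Cp ^ p ≤ Cq ^ q / 2)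
    (g : ℝ → ℝ) (hg : Measurable g)
    (hgp : (∫⁻ x, (‖g x‖₊ : ℝ≥0∞) ^ p) ≤ ENNReal.ofReal (Cp ^ p))
    (hgq : ENNReal.ofReal (Cq ^ q) ≤ ∫⁻ x, (‖g x‖₊ : ℝ≥0∞) ^ q)
    (hgr : (∫⁻ x, (‖g x‖₊ : ℝ≥0∞) ^ r) ≤ ENNReal.ofReal (Cr ^ r)) :
    ENNReal.ofReal ((Cq ^ q / (2 * Cr ^ q)) ^ (r / (r - q))) ≤ volume {x | ε < |g x|} := by
  have hq : 0 < q := hp.trans hpq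
  have hr : 0 < r := hq.trans hqr
  have hrq : 0 < r - q := sub_pos.mpr hqr
  set A : Set ℝ := {x | ε < |g x|} with hA_def
  have hA : MeasurableSet A := measurableSet_lt measurable_const hg.abs
  -- split the q-integral
  have hsplit : (∫⁻ x, (‖g x‖₊ : ℝ≥0∞) ^ q) =
      (∫⁻ x in A, (‖g x‖₊ : ℝ≥0∞) ^ q) + ∫⁻ x in Aᶜ, (‖g x‖₊ : ℝ≥0∞) ^ q :=
    (lintegral_add_compl _ hA).symm
  -- bound on the complement
  have hcompl : (∫⁻ x in Aᶜ, (‖g x‖₊ : ℝ≥0∞) ^ q) ≤ ENNReal.ofReal (Cq ^ q / 2) := by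
    have h1 : (∫⁻ x in Aᶜ, (‖g x‖₊ : ℝ≥0∞) ^ q) ≤
        ∫⁻ x in Aᶜ, ENNReal.ofReal ε ^ (q - p) * (‖g x‖₊ : ℝ≥0∞) ^ p := by
      apply setLIntegral_mono' hA.compl
      intro x hx
      have hxε : |g x| ≤ ε := not_lt.mp hx
      have : ((‖g x‖₊ : ℝ≥0∞)) ^ q = (‖g x‖₊ : ℝ≥0∞) ^ (q - p) * (‖g x‖₊ : ℝ≥0∞) ^ p := by
        rw [← ENNReal.rpow_add_of_nonneg _ _ (by linarith) hp.le, sub_add_cancel]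
      rw [this]
      have hle : (‖g x‖₊ : ℝ≥0∞) ≤ ENNReal.ofReal ε := by
        change ‖g x‖ₑ ≤ _
        rw [← ofReal_norm]
        exact ENNReal.ofReal_le_ofReal (by simpa using hxε)
      exact mul_le_mul' (ENNReal.rpow_le_rpow hle (by linarith)) le_rfl
    have h2 : (∫⁻ x in Aᶜ, ENNReal.ofReal ε ^ (q - p) * (‖g x‖₊ : ℝ≥0∞) ^ p) ≤
        ENNReal.ofReal ε ^ (q - p) * ∫⁻ x, (‖g x‖₊ : ℝ≥0∞) ^ p := by
      rw [lintegral_const_mul'' _ ((hg.nnnorm.coe_nnreal_ennreal.pow_const _).aemeasurable)]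
      gcongr
      exact Measure.restrict_le_self
    calc (∫⁻ x in Aᶜ, (‖g x‖₊ : ℝ≥0∞) ^ q) ≤
        ENNReal.ofReal ε ^ (q - p) * ∫⁻ x, (‖g x‖₊ : ℝ≥0∞) ^ p := h1.trans h2
      _ ≤ ENNReal.ofReal ε ^ (q - p) * ENNReal.ofReal (Cp ^ p) := by gcongr
      _ = ENNReal.ofReal (ε ^ (q - p) * Cp ^ p) := by
          rw [ENNReal.ofReal_rpow_of_pos hε, ← ENNReal.ofReal_mul (by positivity)]
      _ ≤ ENNReal.ofReal (Cq ^ q / 2) := ENNReal.ofReal_le_ofReal hεpow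
  -- Hölder bound on A
  have hhold : (∫⁻ x in A, (‖g x‖₊ : ℝ≥0∞) ^ q) ≤
      ENNReal.ofReal (Cr ^ q) * (volume A) ^ ((r - q) / r) := by
    set F : ℝ → ℝ≥0∞ := A.indicator (fun x => (‖g x‖₊ : ℝ≥0∞) ^ q) with hF
    set G : ℝ → ℝ≥0∞ := A.indicator 1 with hG
    have hconj : (r / q).HolderConjugate (r / (r - q)) := by
      refine ⟨?_, by positivity, by positivity⟩
      rw [inv_div, inv_div, inv_one, ← add_div, add_sub_cancel, div_self hr.ne']
    have hFG : F * G = F := by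
      funext x
      by_cases hx : x ∈ A <;> simp [hF, hG, Set.indicator_of_mem, Set.indicator_of_notMem, hx]
    have hFmeas : AEMeasurable F volume :=
      ((hg.nnnorm.coe_nnreal_ennreal.pow_const _).indicator hA).aemeasurable
    have hGmeas : AEMeasurable G volume := (measurable_one.indicator hA).aemeasurable
    have hH := ENNReal.lintegral_mul_le_Lp_mul_Lq volume hconj hFmeas hGmeas
    rw [hFG] at hH
    have hFint : (∫⁻ x, F x) = ∫⁻ x in A, (‖g x‖₊ : ℝ≥0∞) ^ q := lintegral_indicator hA _
    have hFa : (∫⁻ x, F x ^ (r / q)) ^ (1 / (r / q)) ≤ ENNReal.ofReal (Cr ^ q) := by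
      have hFpow : ∀ x, F x ^ (r / q) = A.indicator (fun x => (‖g x‖₊ : ℝ≥0∞) ^ r) x := by
        intro x
        by_cases hx : x ∈ A
        · simp only [hF, Set.indicator_of_mem hx]
          rw [← ENNReal.rpow_mul]
          congr 1
          field_simp
        · simp [hF, Set.indicator_of_notMem hx, ENNReal.zero_rpow_of_pos (div_pos hr hq)]
      have : (∫⁻ x, F x ^ (r / q)) ≤ ENNReal.ofReal (Cr ^ r) := by
        simp_rw [hFpow]
        rw [lintegral_indicator hA]
        exact (setLIntegral_le_lintegral _ _).trans hgr
      calc (∫⁻ x, F x ^ (r / q)) ^ (1 / (r / q)) ≤ ENNReal.ofReal (Cr ^ r) ^ (1 / (r / q)) :=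
            ENNReal.rpow_le_rpow this (by positivity)
        _ = ENNReal.ofReal (Cr ^ q) := by
            rw [ENNReal.ofReal_rpow_of_pos (by positivity), ← Real.rpow_mul hCr.le]
            congr 2
            field_simp
    have hGb : (∫⁻ x, G x ^ (r / (r - q))) ^ (1 / (r / (r - q))) = (volume A) ^ ((r - q) / r) := by
      have hGpow : ∀ x, G x ^ (r / (r - q)) = G x := by
        intro x
        by_cases hx : x ∈ A
        · simp [hG, Set.indicator_of_mem hx]
        · simp [hG, Set.indicator_of_notMem hx, ENNReal.zero_rpow_of_pos (div_pos hr hrq)]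
      simp_rw [hGpow]
      have hGI : (∫⁻ x, G x) = volume A := by
        rw [hG]
        simp [lintegral_indicator hA]
      rw [hGI, one_div, inv_div]
    rw [hFint] at hH
    exact hH.trans (mul_le_mul' hFa hGb.le)
  -- combine
  have hmain : ENNReal.ofReal (Cq ^ q / 2) ≤
      ENNReal.ofReal (Cr ^ q) * (volume A) ^ ((r - q) / r) := by
    have h := hgq.trans (hsplit.le.trans (add_le_add hhold hcompl))
    have h' : ENNReal.ofReal (Cq ^ q) - ENNReal.ofReal (Cq ^ q / 2) ≤
        ENNReal.ofReal (Cr ^ q) * (volume A) ^ ((r - q) / r) := by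
      rw [tsub_le_iff_right]
      exact h
    rwa [← ENNReal.ofReal_sub _ (by positivity), show Cq ^ q - Cq ^ q / 2 = Cq ^ q / 2 by ring]
      at h'
  have hdiv : ENNReal.ofReal (Cq ^ q / (2 * Cr ^ q)) ≤ (volume A) ^ ((r - q) / r) := by
    rw [show Cq ^ q / (2 * Cr ^ q) = (Cq ^ q / 2) / (Cr ^ q) by ring,
      ENNReal.ofReal_div_of_pos (by positivity)]
    rw [ENNReal.div_le_iff_le_mul (Or.inl (by simp [ENNReal.ofReal_eq_zero]; positivity))
      (Or.inl ENNReal.ofReal_ne_top)]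
    rw [mul_comm] at hmain
    exact hmain
  have := ENNReal.rpow_le_rpow hdiv (le_of_lt (by positivity : (0:ℝ) < r / (r - q)))
  rwa [ENNReal.ofReal_rpow_of_nonneg (by positivity) (by positivity),
    ← ENNReal.rpow_mul, show (r - q) / r * (r / (r - q)) = 1 by field_simp,
    ENNReal.rpow_one] at this

private lemma eLpNorm_le_lintegral (s : ℝ) (hs : 0 < s) (C : ℝ) (hC : 0 < C) (f : ℝ → ℝ)
    (h : eLpNorm f (ENNReal.ofReal s) volume ≤ ENNReal.ofReal C) :
    (∫⁻ x, (‖f x‖₊ : ℝ≥0∞) ^ s) ≤ ENNReal.ofReal (C ^ s) := by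
  change (∫⁻ x, ‖f x‖ₑ ^ s) ≤ _
  rw [eLpNorm_eq_lintegral_rpow_enorm_toReal (by simp [ENNReal.ofReal_eq_zero]; linarith)
    ENNReal.ofReal_ne_top, ENNReal.toReal_ofReal hs.le] at h
  have := ENNReal.rpow_le_rpow h hs.le
  rwa [← ENNReal.rpow_mul, one_div, inv_mul_cancel₀ hs.ne', ENNReal.rpow_one,
    ENNReal.ofReal_rpow_of_pos hC] at this

private lemma lintegral_le_eLpNorm (s : ℝ) (hs : 0 < s) (C : ℝ) (hC : 0 < C) (f : ℝ → ℝ)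
    (h : ENNReal.ofReal C ≤ eLpNorm f (ENNReal.ofReal s) volume) :
    ENNReal.ofReal (C ^ s) ≤ ∫⁻ x, (‖f x‖₊ : ℝ≥0∞) ^ s := by
  change _ ≤ (∫⁻ x, ‖f x‖ₑ ^ s)
  rw [eLpNorm_eq_lintegral_rpow_enorm_toReal (by simp [ENNReal.ofReal_eq_zero]; linarith)
    ENNReal.ofReal_ne_top, ENNReal.toReal_ofReal hs.le] at h
  have := ENNReal.rpow_le_rpow h hs.le
  rwa [← ENNReal.rpow_mul, one_div, inv_mul_cancel₀ hs.ne', ENNReal.rpow_one,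
    ENNReal.ofReal_rpow_of_pos hC] at this


/-- The `pqr` theorem: if `0 < p < q < r < ∞`, upper bounds on the `L^p` and `L^r`
norms together with a lower bound on the `L^q` norm give a uniform lower bound on
the measure of a superlevel set. -/
theorem pqr_theorem (p q r : ℝ) (hp : 0 < p) (hpq : p < q) (hqr : q < r)
    (Cp Cq Cr : ℝ) (hCp : 0 < Cp) (hCq : 0 < Cq) (hCr : 0 < Cr) :
    ∃ ε > (0 : ℝ), ∃ δ > (0 : ℝ), ∀ f : ℝ → ℝ,
      AEStronglyMeasurable f volume →
      eLpNorm f (ENNReal.ofReal p) volume ≤ ENNReal.ofReal Cp →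
      ENNReal.ofReal Cq ≤ eLpNorm f (ENNReal.ofReal q) volume →
      eLpNorm f (ENNReal.ofReal r) volume ≤ ENNReal.ofReal Cr →
      ENNReal.ofReal δ ≤ volume {x | ε < |f x|} := by
  have hq : 0 < q := hp.trans hpq
  have hr : 0 < r := hq.trans hqr
  set ε : ℝ := (Cq ^ q / (2 * Cp ^ p)) ^ (1 / (q - p)) with hε_def
  set δ : ℝ := (Cq ^ q / (2 * Cr ^ q)) ^ (r / (r - q)) with hδ_def
  have hε : 0 < ε := by positivity
  have hδ : 0 < δ := by positivity
  refine ⟨ε, hε, δ, hδ, fun f hf h1 h2 h3 => ?_⟩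
  have hεpow : ε ^ (q - p) * Cp ^ p ≤ Cq ^ q / 2 := by
    rw [hε_def, ← Real.rpow_mul (by positivity), one_div,
      inv_mul_cancel₀ (sub_pos.mpr hpq).ne', Real.rpow_one]
    rw [div_mul_eq_mul_div, mul_comm (2 : ℝ), ← div_div, mul_div_assoc,
      div_self (by positivity : (Cp : ℝ) ^ p ≠ 0), mul_one]
  set g : ℝ → ℝ := hf.mk f with hg_def
  have hgm : Measurable g := hf.stronglyMeasurable_mk.measurable
  have hfg : f =ᵐ[volume] g := hf.ae_eq_mk
  have hIeq : ∀ s : ℝ, (∫⁻ x, (‖f x‖₊ : ℝ≥0∞) ^ s) = ∫⁻ x, (‖g x‖₊ : ℝ≥0∞) ^ s := fun s =>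
    lintegral_congr_ae (hfg.mono fun x hx => by simp only [hx])
  have hmeq : volume {x | ε < |f x|} = volume {x | ε < |g x|} :=
    measure_congr (hfg.mono fun x hx => by change (ε < |f x|) = (ε < |g x|); rw [hx])
  rw [hmeq]
  exact pqr_core p q r hp hpq hqr Cp Cq Cr ε hCq hCr hε hεpow g hgm
    ((hIeq p) ▸ eLpNorm_le_lintegral p hp Cp hCp f h1)
    ((hIeq q) ▸ lintegral_le_eLpNorm q hq Cq hCq f h2)
    ((hIeq r) ▸ eLpNorm_le_lintegral r hr Cr hCr f h3)
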